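/- Let L(α,β)_{i,j} = C(i,j)α^jβ^i (lower triangular) and U(α',β')_{i,j} = C(j,i)(α')^i(β')^j (upper triangular). Then the product L(α,β)·U(α',β') is the matrix T(β, β', ββ'(αα'−1)) whose double generating function is 1/(1 − β·u − β'·v − ββ'(αα'−1)·u·v). Concretely, for all i,j ≥ 0: Σ_{k=0}^{min(i,j)} C(i,k)α^kβ^i·C(j,k)(α')^k(β')^j equals the coefficient of u^i v^j in 1/(1 − βu − β'v − ββ'(αα'−1)uv). -/

import Mathlib

open MvPowerSeries Finset

private lemma choose_sum_ext {K : Type*} [Field K] (x : K) (i j n : ℕ) (h : min i j ≤ n) :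
    (∑ k ∈ range (min i j + 1), (i.choose k : K) * (j.choose k) * x ^ k) =
    ∑ k ∈ range (n + 1), (i.choose k : K) * (j.choose k) * x ^ k := by
  refine Finset.sum_subset (Finset.range_subset_range.mpr (by omega)) ?_
  intro k hk hk2
  simp only [Finset.mem_range] at hk hk2
  have : i < k ∨ j < k := by omega
  rcases this with h | h
  · rw [Nat.choose_eq_zero_of_lt h]; simp
  · rw [Nat.choose_eq_zero_of_lt h]; simp

private lemma choose_sum_rec {K : Type*} [Field K] (x : K) (i j : ℕ) :
    (∑ k ∈ range (min (i+1) (j+1) + 1), ((i+1).choose k : K) * ((j+1).choose k) * x ^ k)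
    = (∑ k ∈ range (min i (j+1) + 1), (i.choose k : K) * ((j+1).choose k) * x ^ k)
    + (∑ k ∈ range (min (i+1) j + 1), ((i+1).choose k : K) * (j.choose k) * x ^ k)
    + (x - 1) * (∑ k ∈ range (min i j + 1), (i.choose k : K) * (j.choose k) * x ^ k) := by
  set m := min i j with hm
  rw [choose_sum_ext x (i+1) (j+1) (m+1) (by omega),
      choose_sum_ext x i (j+1) (m+1) (by omega),
      choose_sum_ext x (i+1) j (m+1) (by omega), sub_mul, one_mul]
  nth_rewrite 2 [choose_sum_ext x i j (m+1) (by omega)]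
  have peel : ∀ f : ℕ → K, ∑ k ∈ range (m+1+1), f k = (∑ k ∈ range (m+1), f (k+1)) + f 0 :=
    fun f => Finset.sum_range_succ' f (m+1)
  rw [peel, peel, peel, peel, Finset.mul_sum]
  have hsum : (∑ k ∈ range (m+1), ((i+1).choose (k+1) : K) * ((j+1).choose (k+1)) * x ^ (k+1))
      = ∑ k ∈ range (m+1), ((i.choose (k+1) : K) * ((j+1).choose (k+1)) * x ^ (k+1)
        + ((i+1).choose (k+1) : K) * (j.choose (k+1)) * x ^ (k+1)
        + (x * ((i.choose k : K) * (j.choose k) * x ^ k)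
          - (i.choose (k+1) : K) * (j.choose (k+1)) * x ^ (k+1))) := by
    refine Finset.sum_congr rfl fun k _ => ?_
    rw [Nat.choose_succ_succ i k, Nat.choose_succ_succ j k]
    push_cast
    ring
  rw [Finset.sum_add_distrib, Finset.sum_add_distrib, Finset.sum_sub_distrib] at hsum
  simp only [Nat.choose_zero_right, Nat.cast_one, pow_zero, one_mul, mul_one]
  linear_combination hsum

/-- `L(α,β)·U(α',β') = T(β, β', ββ'(αα'-1))`: for all `i, j`,
`Σ_{k=0}^{min(i,j)} C(i,k) α^k β^i · C(j,k) α'^k β'^j` equals the coefficient of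
`u^i v^j` in `1/(1 - βu - β'v - ββ'(αα'-1)uv)`. -/
theorem L_mul_U_eq_T {K : Type*} [Field K] (α β α' β' : K) :
    let u : MvPowerSeries (Fin 2) K := MvPowerSeries.X 0
    let v : MvPowerSeries (Fin 2) K := MvPowerSeries.X 1
    let F : MvPowerSeries (Fin 2) K :=
      (1 - MvPowerSeries.C β * u - MvPowerSeries.C β' * v
        - MvPowerSeries.C (β * β' * (α * α' - 1)) * (u * v))⁻¹
    ∀ i j : ℕ,
      (∑ k ∈ Finset.range (min i j + 1),
        ((i.choose k : K) * α ^ k * β ^ i) * ((j.choose k : K) * α' ^ k * β' ^ j)) =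
      MvPowerSeries.coeff (Finsupp.single 0 i + Finsupp.single 1 j) F := by
  intro u v F i j
  set c : K := β * β' * (α * α' - 1) with hc
  set S : ℕ → ℕ → K := fun i j => ∑ k ∈ Finset.range (min i j + 1),
      ((i.choose k : K) * α ^ k * β ^ i) * ((j.choose k : K) * α' ^ k * β' ^ j) with hSdef
  have hS : ∀ i j, S i j = β ^ i * β' ^ j *
      ∑ k ∈ range (min i j + 1), (i.choose k : K) * (j.choose k) * (α * α') ^ k := by
    intro i j
    rw [hSdef, Finset.mul_sum]
    exact Finset.sum_congr rfl fun k _ => by rw [mul_pow]; ring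
  have hS0 : ∀ i, S i 0 = β ^ i := by intro i; simp [hS]
  have hS0' : ∀ j, S 0 j = β' ^ j := by intro j; simp [hS]
  have hrec : ∀ i j, S (i+1) (j+1) = β * S i (j+1) + β' * S (i+1) j + c * S i j := by
    intro i j
    rw [hS, hS, hS, hS, choose_sum_rec (α * α') i j, hc]
    ring
  set G : MvPowerSeries (Fin 2) K := fun d => S (d 0) (d 1) with hG
  have hmon1 : MvPowerSeries.C β * u =
      monomial (Finsupp.single (0 : Fin 2) 1) β := by
    rw [show u = MvPowerSeries.X 0 from rfl, X_def, ← monomial_zero_eq_C_apply,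
      monomial_mul_monomial, zero_add, mul_one]
  have hmon2 : MvPowerSeries.C β' * v =
      monomial (Finsupp.single (1 : Fin 2) 1) β' := by
    rw [show v = MvPowerSeries.X 1 from rfl, X_def, ← monomial_zero_eq_C_apply,
      monomial_mul_monomial, zero_add, mul_one]
  have hmon3 : MvPowerSeries.C c * (u * v) =
      monomial (Finsupp.single (0 : Fin 2) 1 + Finsupp.single 1 1) c := by
    rw [show u = MvPowerSeries.X 0 from rfl, show v = MvPowerSeries.X 1 from rfl, X_def, X_def,
      ← monomial_zero_eq_C_apply, monomial_mul_monomial, monomial_mul_monomial,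
      zero_add, mul_one, mul_one]
  have coeffG : ∀ e : Fin 2 →₀ ℕ, MvPowerSeries.coeff e G = S (e 0) (e 1) := fun e => rfl
  set D : MvPowerSeries (Fin 2) K :=
      1 - MvPowerSeries.C β * u - MvPowerSeries.C β' * v
        - MvPowerSeries.C c * (u * v) with hD
  -- coefficients of G times each monomial
  have key1 : ∀ d : Fin 2 →₀ ℕ,
      MvPowerSeries.coeff d (G * monomial (Finsupp.single (0 : Fin 2) 1) β)
      = if 1 ≤ d 0 then S (d 0 - 1) (d 1) * β else 0 := by
    intro d
    rw [coeff_mul_monomial, if_congr Finsupp.single_le_iff rfl rfl]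
    split_ifs with h
    · rw [coeff_apply, hG]
      simp [Finsupp.tsub_apply, Finsupp.single_apply]
    · rfl
  have key2 : ∀ d : Fin 2 →₀ ℕ,
      MvPowerSeries.coeff d (G * monomial (Finsupp.single (1 : Fin 2) 1) β')
      = if 1 ≤ d 1 then S (d 0) (d 1 - 1) * β' else 0 := by
    intro d
    rw [coeff_mul_monomial, if_congr Finsupp.single_le_iff rfl rfl]
    split_ifs with h
    · rw [coeff_apply, hG]
      simp [Finsupp.tsub_apply, Finsupp.single_apply]
    · rfl
  have key3 : ∀ d : Fin 2 →₀ ℕ,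
      MvPowerSeries.coeff d
        (G * monomial (Finsupp.single (0 : Fin 2) 1 + Finsupp.single 1 1) c)
      = if 1 ≤ d 0 ∧ 1 ≤ d 1 then S (d 0 - 1) (d 1 - 1) * c else 0 := by
    intro d
    rw [coeff_mul_monomial]
    have hcond : (Finsupp.single (0 : Fin 2) 1 + Finsupp.single 1 1 ≤ d) ↔
        (1 ≤ d 0 ∧ 1 ≤ d 1) := by
      rw [Finsupp.le_def]
      constructor
      · intro h; exact ⟨by simpa using h 0, by simpa using h 1⟩
      · intro ⟨h0, h1⟩ a
        match a with
        | 0 => simpa using h0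
        | 1 => simpa using h1
    rw [if_congr hcond rfl rfl]
    split_ifs with h
    · rw [coeff_apply, hG]
      simp [Finsupp.tsub_apply, Finsupp.single_apply, Finsupp.add_apply]
    · rfl
  have hGD : G * D = 1 := by
    ext d
    rw [hD, mul_sub, mul_sub, mul_sub, mul_one, map_sub, map_sub, map_sub,
      hmon1, hmon2, hmon3, key1 d, key2 d, key3 d, MvPowerSeries.coeff_one, coeffG d]
    have hzero : (d = 0) ↔ (d 0 = 0 ∧ d 1 = 0) := by
      constructor
      · intro h; simp [h]
      · intro ⟨h0, h1⟩
        ext a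
        match a with
        | 0 => simpa using h0
        | 1 => simpa using h1
    rw [if_congr hzero rfl rfl]
    generalize d 0 = a
    generalize d 1 = b
    match a, b with
    | 0, 0 =>
      simp only [Nat.le_zero, Nat.one_ne_zero, if_false, and_self, if_true,
        Nat.lt_irrefl, not_lt_zero']
      norm_num
      rw [hS0 0, pow_zero]
    | 0, b+1 =>
      simp only [Nat.le_zero, Nat.one_ne_zero, if_false, Nat.le_add_left,
        if_true, false_and, Nat.succ_ne_zero, and_false, Nat.add_sub_cancel, and_true]
      rw [hS0', hS0']
      ring
    | a+1, 0 =>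
      simp only [Nat.le_zero, Nat.one_ne_zero, if_false, Nat.le_add_left,
        if_true, and_false, Nat.succ_ne_zero, false_and, Nat.add_sub_cancel, and_true]
      rw [hS0, hS0]
      ring
    | a+1, b+1 =>
      simp only [Nat.le_add_left, if_true, and_self, Nat.succ_ne_zero, and_false,
        false_and, if_false, Nat.add_sub_cancel]
      rw [hrec]
      ring
  have hconst : ∀ (n : Fin 2 →₀ ℕ) (x : K), n ≠ 0 → constantCoeff (monomial n x) = 0 := by
    intro n x hn
    rw [← coeff_zero_eq_constantCoeff_apply, coeff_monomial, if_neg (by simpa using hn.symm)]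
  have hD0 : constantCoeff D ≠ 0 := by
    rw [hD, hmon1, hmon2, hmon3]
    rw [map_sub, map_sub, map_sub, map_one,
      hconst _ _ (by simp [Finsupp.single_eq_zero]),
      hconst _ _ (by simp [Finsupp.single_eq_zero]),
      hconst _ _ (by
        intro h
        have := DFunLike.congr_fun h (0 : Fin 2)
        simp [Finsupp.add_apply, Finsupp.single_apply] at this)]
    norm_num
  have hFG : F = G := by
    rw [show F = D⁻¹ from rfl, MvPowerSeries.inv_eq_iff_mul_eq_one hD0]
    exact hGD
  rw [hFG, coeffG]
  show S i j = S _ _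
  congr 1 <;> simp [Finsupp.add_apply, Finsupp.single_apply]
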